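/- The function f(k) := ∫₀¹ arcsin(√(u·(2−ku)/(2+k(1−2u)))) du − π/4 satisfies f(0) = 0 and f is nonincreasing on [0,2]; consequently f(k) ≤ 0 for all k ∈ [0,2]. -/

import Mathlib

open Real

/-- `f(k) = ∫₀¹ arcsin √(u(2−ku)/(2+k(1−2u))) du − π/4`. -/
noncomputable def ffun (k : ℝ) : ℝ :=
  (∫ u in Set.Ioc (0 : ℝ) 1,
    Real.arcsin (Real.sqrt (u * (2 - k * u) / (2 + k * (1 - 2 * u))))) - π / 4

lemma ffun_integrable (k : ℝ) :
    MeasureTheory.IntegrableOn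
      (fun u : ℝ => Real.arcsin (Real.sqrt (u * (2 - k * u) / (2 + k * (1 - 2 * u)))))
      (Set.Ioc (0 : ℝ) 1) := by
  apply MeasureTheory.Measure.integrableOn_of_bounded (M := π / 2)
  · simp [Real.volume_Ioc]
  · exact (Real.continuous_arcsin.measurable.comp <|
      (Real.continuous_sqrt.measurable).comp <|
        ((measurable_id.mul ((measurable_const.sub (measurable_const.mul measurable_id)))).div
          (measurable_const.add
            (measurable_const.mul (measurable_const.sub
              (measurable_const.mul measurable_id)))))).aestronglyMeasurable
  · filter_upwards with u
    rw [Real.norm_eq_abs, abs_le]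
    exact ⟨Real.neg_pi_div_two_le_arcsin _, Real.arcsin_le_pi_div_two _⟩

lemma ffun_pointwise {k₁ k₂ u : ℝ} (hk₁ : 0 ≤ k₁) (h12 : k₁ ≤ k₂) (hk₂ : k₂ ≤ 2)
    (hu : u ∈ Set.Ioc (0 : ℝ) 1) :
    u * (2 - k₂ * u) / (2 + k₂ * (1 - 2 * u)) ≤
      u * (2 - k₁ * u) / (2 + k₁ * (1 - 2 * u)) := by
  obtain ⟨hu0, hu1⟩ := hu
  have hk₁2 : k₁ ≤ 2 := le_trans h12 hk₂
  have hk₂0 : 0 ≤ k₂ := le_trans hk₁ h12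
  have hnum₁ : 0 ≤ u * (2 - k₁ * u) := by nlinarith [mul_nonneg hk₁ (sub_nonneg.2 hu1)]
  have hd₁ : (0:ℝ) ≤ 2 + k₁ * (1 - 2 * u) := by nlinarith
  have hd₂ : (0:ℝ) ≤ 2 + k₂ * (1 - 2 * u) := by nlinarith
  rcases eq_or_lt_of_le hd₂ with h0 | hd₂pos
  · rw [← h0, div_zero]
    exact div_nonneg hnum₁ hd₁
  · have hd₁pos : (0:ℝ) < 2 + k₁ * (1 - 2 * u) := by
      rcases le_or_gt 0 (1 - 2 * u) with hv | hv
      · nlinarith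
      · nlinarith [mul_le_mul_of_nonpos_right h12 hv.le]
    rw [div_le_div_iff₀ hd₂pos hd₁pos]
    nlinarith [mul_nonneg (mul_nonneg hu0.le (sub_nonneg.2 h12)) (sub_nonneg.2 hu1)]

lemma ffun_antitone : AntitoneOn ffun (Set.Icc 0 2) := by
  intro k₁ hk₁ k₂ hk₂ h12
  unfold ffun
  apply sub_le_sub_right
  apply MeasureTheory.setIntegral_mono_on (ffun_integrable k₂) (ffun_integrable k₁)
    measurableSet_Ioc
  intro u hu
  exact Real.monotone_arcsin (Real.sqrt_le_sqrt (ffun_pointwise hk₁.1 h12 hk₂.2 hu))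

lemma arcsin_sqrt_integral : ∫ u in Set.Ioc (0:ℝ) 1, Real.arcsin (Real.sqrt u) = π / 4 := by
  have hcont : Continuous fun x : ℝ => Real.arcsin (Real.sqrt x) :=
    Real.continuous_arcsin.comp Real.continuous_sqrt
  rw [← intervalIntegral.integral_of_le (zero_le_one)]
  set I := ∫ x in (0:ℝ)..1, Real.arcsin (Real.sqrt x) with hI
  have hrefl : I = ∫ x in (0:ℝ)..1, Real.arcsin (Real.sqrt (1 - x)) := by
    rw [intervalIntegral.integral_comp_sub_left (fun x => Real.arcsin (Real.sqrt x)) 1]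
    norm_num
    exact hI
  have hkey : ∀ x ∈ Set.uIcc (0:ℝ) 1,
      Real.arcsin (Real.sqrt (1 - x)) = π / 2 - Real.arcsin (Real.sqrt x) := by
    intro x hx
    rw [Set.uIcc_of_le zero_le_one] at hx
    have h1 : Real.sin (Real.arccos (Real.sqrt x)) = Real.sqrt (1 - x) := by
      rw [Real.sin_arccos, Real.sq_sqrt hx.1]
    have h2 : Real.arcsin (Real.sqrt (1 - x)) = Real.arccos (Real.sqrt x) := by
      rw [← h1, Real.arcsin_sin (by linarith [Real.arccos_nonneg (Real.sqrt x), Real.pi_pos])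
        (Real.arccos_le_pi_div_two.2 (Real.sqrt_nonneg x))]
    rw [h2]; rfl
  have h3 : I = π / 2 - I := by
    calc I = ∫ x in (0:ℝ)..1, Real.arcsin (Real.sqrt (1 - x)) := hrefl
    _ = ∫ x in (0:ℝ)..1, (π / 2 - Real.arcsin (Real.sqrt x)) :=
        intervalIntegral.integral_congr hkey
    _ = (∫ _x in (0:ℝ)..1, π / 2) - ∫ x in (0:ℝ)..1, Real.arcsin (Real.sqrt x) :=
        intervalIntegral.integral_sub intervalIntegrable_const (hcont.intervalIntegrable 0 1)
    _ = π / 2 - I := by simp; exact hI.symm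
  linarith

lemma ffun_zero : ffun 0 = 0 := by
  unfold ffun
  have h : ∀ u : ℝ, Real.arcsin (Real.sqrt (u * (2 - 0 * u) / (2 + 0 * (1 - 2 * u)))) =
      Real.arcsin (Real.sqrt u) := by
    intro u; norm_num
  simp only [h, arcsin_sqrt_integral]
  ring

/-- `f(0) = 0`, `f` is nonincreasing on `[0,2]`, and consequently
`f(k) ≤ 0` for all `k ∈ [0,2]`. -/
theorem ffun_nonpos :
    ffun 0 = 0 ∧ AntitoneOn ffun (Set.Icc 0 2) ∧
      ∀ k ∈ Set.Icc (0 : ℝ) 2, ffun k ≤ 0 := by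
  refine ⟨ffun_zero, ffun_antitone, fun k hk => ?_⟩
  have h0 : (0:ℝ) ∈ Set.Icc (0:ℝ) 2 := ⟨le_refl 0, by norm_num⟩
  calc ffun k ≤ ffun 0 := ffun_antitone h0 hk hk.1
  _ = 0 := ffun_zero
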